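/- Let n ≥ 1 and let K ⊆ ℝⁿ be a nonempty compact ball-body. Then Vol(K)^{1/n} + Vol(K^c)^{1/n} ≤ Vol(B(0,1))^{1/n}, where Vol denotes the n-dimensional Lebesgue measure (volume) on ℝⁿ. -/

import Mathlib

open Metric Set MeasureTheory

noncomputable section

/-- The `c`-dual of a set `A ⊆ ℝⁿ`. -/
def cDual {n : ℕ} (A : Set (EuclideanSpace ℝ (Fin n))) : Set (EuclideanSpace ℝ (Fin n)) :=
  {y | ∀ x ∈ A, ‖x - y‖ ≤ 1}

open Pointwise ENNReal
open scoped NNReal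

theorem sumset1d (X Y Z : Set ℝ) (hX : X.Nonempty) (hY : Y.Nonempty)
    (hXm : MeasurableSet X) (hYm : MeasurableSet Y)
    (hZ : ∀ x ∈ X, ∀ y ∈ Y, x + y ∈ Z) :
    volume X + volume Y ≤ volume Z := by
  -- compact case first
  have compact_case : ∀ (K₁ K₂ : Set ℝ), K₁.Nonempty → K₂.Nonempty → IsCompact K₁ →
      IsCompact K₂ → K₁ ⊆ X → K₂ ⊆ Y → volume K₁ + volume K₂ ≤ volume Z := by
    intro K₁ K₂ h1 h2 hc1 hc2 hs1 hs2
    set a := sSup K₁ with ha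
    set b := sInf K₂ with hb
    have haK : a ∈ K₁ := hc1.sSup_mem h1
    have hbK : b ∈ K₂ := hc2.sInf_mem h2
    have hsub : (b +ᵥ K₁) ∪ (a +ᵥ K₂) ⊆ Z := by
      rintro z (⟨x, hx, rfl⟩ | ⟨y, hy, rfl⟩)
      · have := hZ x (hs1 hx) b (hs2 hbK)
        simpa [vadd_eq_add, add_comm] using this
      · have := hZ a (hs1 haK) y (hs2 hy)
        simpa [vadd_eq_add, add_comm] using this
    have hinter : (b +ᵥ K₁) ∩ (a +ᵥ K₂) ⊆ {a + b} := by
      rintro z ⟨⟨x, hx, rfl⟩, ⟨y, hy, hz⟩⟩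
      have hxa : x ≤ a := le_csSup hc1.bddAbove hx
      have hby : b ≤ y := csInf_le hc2.bddBelow hy
      simp only [vadd_eq_add] at hz ⊢
      simp only [mem_singleton_iff]
      linarith
    have hkey : volume ((b +ᵥ K₁) ∪ (a +ᵥ K₂)) = volume (b +ᵥ K₁) + volume (a +ᵥ K₂) := by
      have := measure_union_add_inter (μ := volume) (b +ᵥ K₁) (hc2.vadd a).measurableSet
      have hz : volume ((b +ᵥ K₁) ∩ (a +ᵥ K₂)) = 0 :=
        measure_mono_null hinter (measure_singleton _)
      rw [hz, add_zero] at this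
      exact this
    calc volume K₁ + volume K₂ = volume (b +ᵥ K₁) + volume (a +ᵥ K₂) := by
          rw [measure_vadd, measure_vadd]
      _ = volume ((b +ᵥ K₁) ∪ (a +ᵥ K₂)) := hkey.symm
      _ ≤ volume Z := measure_mono hsub
  obtain ⟨x₀, hx₀⟩ := hX
  obtain ⟨y₀, hy₀⟩ := hY
  -- translate bounds
  have htrX : volume X ≤ volume Z := by
    have : y₀ +ᵥ X ⊆ Z := by
      rintro z ⟨x, hx, rfl⟩
      simpa [vadd_eq_add, add_comm] using hZ x hx y₀ hy₀
    calc volume X = volume (y₀ +ᵥ X) := (measure_vadd _ _ _).symm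
      _ ≤ volume Z := measure_mono this
  have htrY : volume Y ≤ volume Z := by
    have : x₀ +ᵥ Y ⊆ Z := by
      rintro z ⟨y, hy, rfl⟩
      simpa [vadd_eq_add] using hZ x₀ hx₀ y hy
    calc volume Y = volume (x₀ +ᵥ Y) := (measure_vadd _ _ _).symm
      _ ≤ volume Z := measure_mono this
  rcases eq_or_ne (volume X) ⊤ with hXi | hXi
  · rw [hXi] at htrX
    simp [top_le_iff.mp htrX]
  rcases eq_or_ne (volume Y) ⊤ with hYi | hYi
  · rw [hYi] at htrY
    simp [top_le_iff.mp htrY]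
  refine ENNReal.le_of_forall_pos_le_add fun ε hε _ => ?_
  have hε2 : ((ε : ℝ≥0∞) / 2) ≠ 0 := by
    simp [ENNReal.div_eq_zero_iff, hε.ne']
  obtain ⟨K₁, hK₁X, hK₁c, hK₁v⟩ := hXm.exists_isCompact_lt_add (μ := volume) hXi hε2
  obtain ⟨K₂, hK₂Y, hK₂c, hK₂v⟩ := hYm.exists_isCompact_lt_add (μ := volume) hYi hε2
  have hmain := compact_case (insert x₀ K₁) (insert y₀ K₂) ⟨x₀, mem_insert _ _⟩
    ⟨y₀, mem_insert _ _⟩ (hK₁c.insert x₀) (hK₂c.insert y₀)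
    (insert_subset hx₀ hK₁X) (insert_subset hy₀ hK₂Y)
  have h1 : volume X ≤ volume (insert x₀ K₁) + ε / 2 :=
    le_trans hK₁v.le (add_le_add_left (measure_mono (subset_insert _ _)) _)
  have h2 : volume Y ≤ volume (insert y₀ K₂) + ε / 2 :=
    le_trans hK₂v.le (add_le_add_left (measure_mono (subset_insert _ _)) _)
  calc volume X + volume Y ≤ (volume (insert x₀ K₁) + ε / 2) + (volume (insert y₀ K₂) + ε / 2) :=
        add_le_add h1 h2
    _ = (volume (insert x₀ K₁) + volume (insert y₀ K₂)) + (ε / 2 + ε / 2) := by ring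
    _ ≤ volume Z + ε := by
        rw [ENNReal.add_halves]
        exact add_le_add_left hmain _

theorem ennreal_young (a b : ℝ≥0∞) (t : ℝ) (ht0 : 0 < t) (ht1 : t < 1) :
    a ^ (1 - t) * b ^ t ≤ ENNReal.ofReal (1 - t) * a + ENNReal.ofReal t * b := by
  have h1t : (0:ℝ) < 1 - t := by linarith
  rcases eq_or_ne a ⊤ with rfl | ha
  · rcases eq_or_ne b 0 with rfl | hb
    · simp [ENNReal.zero_rpow_of_pos ht0]
    · have : ENNReal.ofReal t * b ≠ 0 := by
        simp [ENNReal.ofReal_eq_zero, hb, not_le, ht0]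
      rw [ENNReal.top_rpow_of_pos h1t]
      have h2 : ENNReal.ofReal (1 - t) * (⊤:ℝ≥0∞) = ⊤ :=
        ENNReal.mul_top (ENNReal.ofReal_pos.mpr h1t).ne'
      rw [h2]
      simp [ENNReal.add_eq_top, ENNReal.mul_eq_top, ENNReal.ofReal_eq_zero, not_le, h1t, ht1]
  rcases eq_or_ne b ⊤ with rfl | hb
  · rw [ENNReal.top_rpow_of_pos ht0]
    have h2 : ENNReal.ofReal t * (⊤:ℝ≥0∞) = ⊤ :=
      ENNReal.mul_top (ENNReal.ofReal_pos.mpr ht0).ne'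
    rw [h2]
    simp
  -- finite case: reduce to NNReal
  lift a to ℝ≥0 using ha
  lift b to ℝ≥0 using hb
  set w₁ := Real.toNNReal (1 - t) with hw₁
  set w₂ := Real.toNNReal t with hw₂
  have hc₁ : (w₁ : ℝ) = 1 - t := Real.coe_toNNReal _ h1t.le
  have hc₂ : (w₂ : ℝ) = t := Real.coe_toNNReal _ ht0.le
  have hw : w₁ + w₂ = 1 := by
    have : ((w₁ + w₂ : ℝ≥0) : ℝ) = ((1 : ℝ≥0) : ℝ) := by
      push_cast [hc₁, hc₂]; ring
    exact_mod_cast this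
  have key := NNReal.geom_mean_le_arith_mean2_weighted w₁ w₂ a b hw
  rw [hc₁, hc₂] at key
  have key' : ((a ^ (1 - t) * b ^ t : ℝ≥0) : ℝ≥0∞) ≤ ((w₁ * a + w₂ * b : ℝ≥0) : ℝ≥0∞) :=
    ENNReal.coe_le_coe.mpr key
  have e1 : ((a ^ (1 - t) * b ^ t : ℝ≥0) : ℝ≥0∞) = (a : ℝ≥0∞) ^ (1 - t) * (b : ℝ≥0∞) ^ t := by
    push_cast
    rw [ENNReal.coe_rpow_of_nonneg _ h1t.le, ENNReal.coe_rpow_of_nonneg _ ht0.le]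
  have e2 : ((w₁ * a + w₂ * b : ℝ≥0) : ℝ≥0∞)
      = ENNReal.ofReal (1 - t) * a + ENNReal.ofReal t * b := by
    push_cast
    rfl
  rw [e1, e2] at key'
  exact key'

theorem pl1d_norm (t : ℝ) (ht0 : 0 < t) (ht1 : t < 1) (f g h : ℝ → ℝ≥0∞)
    (hf : Measurable f) (hg : Measurable g) (hh : Measurable h)
    (hsf : (⨆ r, f r) = 1) (hsg : (⨆ r, g r) = 1)
    (Ch : ℝ≥0∞) (hCh : Ch ≠ ⊤) (hbh : ∀ r, h r ≤ Ch)
    (hyp : ∀ r s : ℝ, f r ^ (1 - t) * g s ^ t ≤ h ((1 - t) * r + t * s)) :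
    ENNReal.ofReal (1 - t) * (∫⁻ r, f r) + ENNReal.ofReal t * (∫⁻ r, g r) ≤ ∫⁻ r, h r := by
  have h1t : (0:ℝ) < 1 - t := by linarith
  have hbf : ∀ r, f r ≤ 1 := fun r => hsf ▸ le_iSup f r
  have hbg : ∀ r, g r ≤ 1 := fun r => hsg ▸ le_iSup g r
  have hfne : ∀ r, f r ≠ ⊤ := fun r => ((hbf r).trans_lt ENNReal.one_lt_top).ne
  have hgne : ∀ r, g r ≠ ⊤ := fun r => ((hbg r).trans_lt ENNReal.one_lt_top).ne
  have hhne : ∀ r, h r ≠ ⊤ := fun r => ((hbh r).trans_lt (lt_top_iff_ne_top.mpr hCh)).ne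
  set F : ℝ → ℝ := fun r => (f r).toReal with hF
  set G : ℝ → ℝ := fun r => (g r).toReal with hG
  set H : ℝ → ℝ := fun r => (h r).toReal with hH
  -- layer cake representations
  have layerf : (∫⁻ r, f r) = ∫⁻ τ in Ioi (0:ℝ), volume {a | τ ≤ F a} := by
    rw [← lintegral_eq_lintegral_meas_le volume
      (Filter.Eventually.of_forall fun r => ENNReal.toReal_nonneg)
      hf.ennreal_toReal.aemeasurable]
    exact lintegral_congr fun r => (ENNReal.ofReal_toReal (hfne r)).symm
  have layerg : (∫⁻ r, g r) = ∫⁻ τ in Ioi (0:ℝ), volume {a | τ ≤ G a} := by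
    rw [← lintegral_eq_lintegral_meas_le volume
      (Filter.Eventually.of_forall fun r => ENNReal.toReal_nonneg)
      hg.ennreal_toReal.aemeasurable]
    exact lintegral_congr fun r => (ENNReal.ofReal_toReal (hgne r)).symm
  have layerh : (∫⁻ r, h r) = ∫⁻ τ in Ioi (0:ℝ), volume {a | τ ≤ H a} := by
    rw [← lintegral_eq_lintegral_meas_le volume
      (Filter.Eventually.of_forall fun r => ENNReal.toReal_nonneg)
      hh.ennreal_toReal.aemeasurable]
    exact lintegral_congr fun r => (ENNReal.ofReal_toReal (hhne r)).symm
  set φf : ℝ → ℝ≥0∞ := fun τ => volume {a | τ ≤ F a} with hφf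
  set φg : ℝ → ℝ≥0∞ := fun τ => volume {a | τ ≤ G a} with hφg
  set φh : ℝ → ℝ≥0∞ := fun τ => volume {a | τ ≤ H a} with hφh
  have hφf_anti : Antitone φf := fun τ τ' hττ' =>
    measure_mono fun a ha => le_trans hττ' ha
  have hφg_anti : Antitone φg := fun τ τ' hττ' =>
    measure_mono fun a ha => le_trans hττ' ha
  have hφf_m : Measurable φf := hφf_anti.measurable
  have hφg_m : Measurable φg := hφg_anti.measurable
  -- pointwise level-set inequality on Ioo 0 1
  have key : ∀ τ ∈ Ioo (0:ℝ) 1,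
      ENNReal.ofReal (1 - t) * φf τ + ENNReal.ofReal t * φg τ ≤ φh τ := by
    intro τ hτ
    obtain ⟨hτ0, hτ1⟩ := hτ
    set X : Set ℝ := {a | τ ≤ F a} with hX
    set Y : Set ℝ := {a | τ ≤ G a} with hY
    have hXm : MeasurableSet X := hf.ennreal_toReal measurableSet_Ici
    have hYm : MeasurableSet Y := hg.ennreal_toReal measurableSet_Ici
    have hXne : X.Nonempty := by
      have : ENNReal.ofReal τ < ⨆ r, f r := by
        rw [hsf]; exact ENNReal.ofReal_lt_one.mpr hτ1
      obtain ⟨r, hr⟩ := lt_iSup_iff.mp this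
      refine ⟨r, ?_⟩
      have h2 := ENNReal.toReal_strict_mono (hfne r) hr
      rw [ENNReal.toReal_ofReal hτ0.le] at h2
      exact h2.le
    have hYne : Y.Nonempty := by
      have : ENNReal.ofReal τ < ⨆ r, g r := by
        rw [hsg]; exact ENNReal.ofReal_lt_one.mpr hτ1
      obtain ⟨r, hr⟩ := lt_iSup_iff.mp this
      refine ⟨r, ?_⟩
      have h2 := ENNReal.toReal_strict_mono (hgne r) hr
      rw [ENNReal.toReal_ofReal hτ0.le] at h2
      exact h2.le
    -- scaled sets
    have hXm' : MeasurableSet ((1 - t) • X) := by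
      have : (1 - t) • X = (fun x => (1 - t)⁻¹ * x) ⁻¹' X := by
        ext x
        rw [Set.mem_smul_set_iff_inv_smul_mem₀ (ne_of_gt h1t)]
        rfl
      rw [this]
      exact (measurable_const_mul _) hXm
    have hYm' : MeasurableSet (t • Y) := by
      have : t • Y = (fun x => t⁻¹ * x) ⁻¹' Y := by
        ext x
        rw [Set.mem_smul_set_iff_inv_smul_mem₀ (ne_of_gt ht0)]
        rfl
      rw [this]
      exact (measurable_const_mul _) hYm
    have hsum := sumset1d ((1 - t) • X) (t • Y) {a | τ ≤ H a}
      (hXne.smul_set) (hYne.smul_set) hXm' hYm' ?_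
    · have hvX : volume ((1 - t) • X) = ENNReal.ofReal (1 - t) * volume X := by
        rw [Measure.addHaar_smul]
        congr 1
        rw [Module.finrank_self, pow_one, abs_of_pos h1t]
      have hvY : volume (t • Y) = ENNReal.ofReal t * volume Y := by
        rw [Measure.addHaar_smul]
        congr 1
        rw [Module.finrank_self, pow_one, abs_of_pos ht0]
      calc ENNReal.ofReal (1 - t) * φf τ + ENNReal.ofReal t * φg τ
          = volume ((1 - t) • X) + volume (t • Y) := by rw [hvX, hvY]
        _ ≤ volume {a | τ ≤ H a} := hsum
    · rintro x ⟨r, hr, rfl⟩ y ⟨s, hs, rfl⟩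
      simp only [smul_eq_mul, mem_setOf_eq]
      have hfr : ENNReal.ofReal τ ≤ f r := ENNReal.ofReal_le_of_le_toReal hr
      have hgs : ENNReal.ofReal τ ≤ g s := ENNReal.ofReal_le_of_le_toReal hs
      have hlow : ENNReal.ofReal τ ≤ h ((1 - t) * r + t * s) := by
        refine le_trans ?_ (hyp r s)
        have : ENNReal.ofReal τ ^ (1 - t) * ENNReal.ofReal τ ^ t ≤ f r ^ (1-t) * g s ^ t :=
          mul_le_mul' (ENNReal.rpow_le_rpow hfr h1t.le) (ENNReal.rpow_le_rpow hgs ht0.le)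
        refine le_trans (le_of_eq ?_) this
        rw [← ENNReal.rpow_add _ _ (by simp [ENNReal.ofReal_eq_zero, not_le, hτ0])
          ENNReal.ofReal_ne_top]
        norm_num
      have := ENNReal.toReal_mono (hhne _) hlow
      rwa [ENNReal.toReal_ofReal hτ0.le] at this
  -- integrate over Ioo 0 1
  have hIoi : Ioo (0:ℝ) 1 ∪ Ici 1 = Ioi 0 := Ioo_union_Ici_eq_Ioi zero_lt_one
  have hdisj : Disjoint (Ioo (0:ℝ) 1) (Ici 1) :=
    Set.disjoint_left.mpr fun x hx h1 => absurd h1 (not_le.mpr hx.2)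
  have splitf : (∫⁻ τ in Ioi (0:ℝ), φf τ) = ∫⁻ τ in Ioo (0:ℝ) 1, φf τ := by
    rw [← hIoi, lintegral_union measurableSet_Ici hdisj]
    have : (∫⁻ τ in Ici (1:ℝ), φf τ) = 0 := by
      rw [setLIntegral_congr Ioi_ae_eq_Ici.symm]
      rw [setLIntegral_congr_fun measurableSet_Ioi
        (fun τ (hτ : τ ∈ Ioi (1:ℝ)) => ?_), lintegral_zero]
      have : {a | τ ≤ F a} = ∅ := by
        ext a
        simp only [mem_setOf_eq, mem_empty_iff_false, iff_false, not_le]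
        calc F a ≤ 1 := by
              rw [hF]
              simpa using ENNReal.toReal_mono ENNReal.one_ne_top (hbf a)
          _ < τ := hτ
      show φf τ = 0
      rw [hφf]; simp only [this, measure_empty]
    rw [this, add_zero]
  have splitg : (∫⁻ τ in Ioi (0:ℝ), φg τ) = ∫⁻ τ in Ioo (0:ℝ) 1, φg τ := by
    rw [← hIoi, lintegral_union measurableSet_Ici hdisj]
    have : (∫⁻ τ in Ici (1:ℝ), φg τ) = 0 := by
      rw [setLIntegral_congr Ioi_ae_eq_Ici.symm]
      rw [setLIntegral_congr_fun measurableSet_Ioi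
        (fun τ (hτ : τ ∈ Ioi (1:ℝ)) => ?_), lintegral_zero]
      have : {a | τ ≤ G a} = ∅ := by
        ext a
        simp only [mem_setOf_eq, mem_empty_iff_false, iff_false, not_le]
        calc G a ≤ 1 := by
              rw [hG]
              simpa using ENNReal.toReal_mono ENNReal.one_ne_top (hbg a)
          _ < τ := hτ
      show φg τ = 0
      rw [hφg]; simp only [this, measure_empty]
    rw [this, add_zero]
  calc ENNReal.ofReal (1 - t) * (∫⁻ r, f r) + ENNReal.ofReal t * (∫⁻ r, g r)
      = ∫⁻ τ in Ioo (0:ℝ) 1,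
          (ENNReal.ofReal (1 - t) * φf τ + ENNReal.ofReal t * φg τ) := by
        rw [layerf, layerg, splitf, splitg,
          lintegral_add_left (hφf_m.const_mul _),
          lintegral_const_mul _ hφf_m, lintegral_const_mul _ hφg_m]
    _ ≤ ∫⁻ τ in Ioo (0:ℝ) 1, φh τ := by
        refine setLIntegral_mono' measurableSet_Ioo key
    _ ≤ ∫⁻ τ in Ioi (0:ℝ), φh τ := lintegral_mono_set Ioo_subset_Ioi_self
    _ = ∫⁻ r, h r := layerh.symm

theorem pl1d (t : ℝ) (ht0 : 0 < t) (ht1 : t < 1) (f g h : ℝ → ℝ≥0∞)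
    (hf : Measurable f) (hg : Measurable g) (hh : Measurable h)
    (Cf Cg Ch : ℝ≥0∞) (hCf : Cf ≠ ⊤) (hCg : Cg ≠ ⊤) (hCh : Ch ≠ ⊤)
    (hbf : ∀ r, f r ≤ Cf) (hbg : ∀ r, g r ≤ Cg) (hbh : ∀ r, h r ≤ Ch)
    (hIf : (∫⁻ r, f r) ≠ ⊤) (hIg : (∫⁻ r, g r) ≠ ⊤)
    (hyp : ∀ r s : ℝ, f r ^ (1 - t) * g s ^ t ≤ h ((1 - t) * r + t * s)) :
    (∫⁻ r, f r) ^ (1 - t) * (∫⁻ r, g r) ^ t ≤ ∫⁻ r, h r := by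
  have h1t : (0:ℝ) < 1 - t := by linarith
  set Mf := ⨆ r, f r with hMf
  set Mg := ⨆ r, g r with hMg
  rcases eq_or_ne Mf 0 with hMf0 | hMf0
  · have hf0 : ∀ r, f r = 0 := fun r => le_antisymm (hMf0 ▸ le_iSup f r) zero_le
    have : (∫⁻ r, f r) = 0 := by simp [hf0]
    rw [this, ENNReal.zero_rpow_of_pos h1t, zero_mul]
    exact zero_le
  rcases eq_or_ne Mg 0 with hMg0 | hMg0
  · have hg0 : ∀ r, g r = 0 := fun r => le_antisymm (hMg0 ▸ le_iSup g r) zero_le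
    have : (∫⁻ r, g r) = 0 := by simp [hg0]
    rw [this, ENNReal.zero_rpow_of_pos ht0, mul_zero]
    exact zero_le
  have hMft : Mf ≠ ⊤ := fun htop => hCf (top_le_iff.mp (htop ▸ iSup_le hbf))
  have hMgt : Mg ≠ ⊤ := fun htop => hCg (top_le_iff.mp (htop ▸ iSup_le hbg))
  have hfne : ∀ r, f r ≠ ⊤ := fun r => ((hbf r).trans_lt (lt_top_iff_ne_top.mpr hCf)).ne
  have hgne : ∀ r, g r ≠ ⊤ := fun r => ((hbg r).trans_lt (lt_top_iff_ne_top.mpr hCg)).ne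
  set M := Mf ^ (1 - t) * Mg ^ t with hM
  have hM0 : M ≠ 0 := by
    simp only [hM, mul_ne_zero_iff]
    constructor
    · exact (ENNReal.rpow_pos (pos_iff_ne_zero.mpr hMf0) hMft).ne'
    · exact (ENNReal.rpow_pos (pos_iff_ne_zero.mpr hMg0) hMgt).ne'
  have hMt : M ≠ ⊤ := by
    apply ENNReal.mul_ne_top
    · exact ENNReal.rpow_ne_top_of_nonneg h1t.le hMft
    · exact ENNReal.rpow_ne_top_of_nonneg ht0.le hMgt
  have hMfinv : (Mf⁻¹ : ℝ≥0∞) ≠ ⊤ := ENNReal.inv_ne_top.mpr hMf0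
  have hMginv : (Mg⁻¹ : ℝ≥0∞) ≠ ⊤ := ENNReal.inv_ne_top.mpr hMg0
  -- the key algebraic identity
  have alg : ∀ (a b : ℝ≥0∞), a ≠ ⊤ → b ≠ ⊤ →
      (a * Mf⁻¹) ^ (1 - t) * (b * Mg⁻¹) ^ t = (a ^ (1 - t) * b ^ t) * M⁻¹ := by
    intro a b ha hb
    rw [ENNReal.mul_rpow_of_ne_top ha hMfinv, ENNReal.mul_rpow_of_ne_top hb hMginv,
      mul_mul_mul_comm, ENNReal.inv_rpow, ENNReal.inv_rpow,
      ← ENNReal.mul_inv (Or.inl (by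
        exact (ENNReal.rpow_pos (pos_iff_ne_zero.mpr hMf0) hMft).ne'))
        (Or.inr (by
        exact (ENNReal.rpow_pos (pos_iff_ne_zero.mpr hMg0) hMgt).ne'))]
  set f' : ℝ → ℝ≥0∞ := fun r => f r * Mf⁻¹ with hf'
  set g' : ℝ → ℝ≥0∞ := fun r => g r * Mg⁻¹ with hg'
  set h' : ℝ → ℝ≥0∞ := fun r => h r * M⁻¹ with hh'
  have hsf' : (⨆ r, f' r) = 1 := by
    rw [hf']
    simp only
    rw [← ENNReal.iSup_mul, ← hMf, ENNReal.mul_inv_cancel hMf0 hMft]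
  have hsg' : (⨆ r, g' r) = 1 := by
    rw [hg']
    simp only
    rw [← ENNReal.iSup_mul, ← hMg, ENNReal.mul_inv_cancel hMg0 hMgt]
  have hyp' : ∀ r s : ℝ, f' r ^ (1 - t) * g' s ^ t ≤ h' ((1 - t) * r + t * s) := by
    intro r s
    rw [hf', hg', hh']
    simp only
    rw [alg (f r) (g s) (hfne r) (hgne s)]
    exact mul_le_mul_left (hyp r s) M⁻¹
  have key := pl1d_norm t ht0 ht1 f' g' h'
    (hf.mul_const _) (hg.mul_const _) (hh.mul_const _) hsf' hsg'
    (Ch * M⁻¹) (ENNReal.mul_ne_top hCh (ENNReal.inv_ne_top.mpr hM0))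
    (fun r => mul_le_mul_left (hbh r) M⁻¹) hyp'
  have young := ennreal_young (∫⁻ r, f' r) (∫⁻ r, g' r) t ht0 ht1
  have chain : (∫⁻ r, f' r) ^ (1 - t) * (∫⁻ r, g' r) ^ t ≤ ∫⁻ r, h' r :=
    le_trans young key
  have If' : (∫⁻ r, f' r) = (∫⁻ r, f r) * Mf⁻¹ := lintegral_mul_const _ hf
  have Ig' : (∫⁻ r, g' r) = (∫⁻ r, g r) * Mg⁻¹ := lintegral_mul_const _ hg
  have Ih' : (∫⁻ r, h' r) = (∫⁻ r, h r) * M⁻¹ := lintegral_mul_const _ hh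
  rw [If', Ig', Ih', alg _ _ hIf hIg] at chain
  exact (ENNReal.mul_le_mul_iff_left (ENNReal.inv_ne_zero.mpr hMt)
    (ENNReal.inv_ne_top.mpr hM0)).mp chain

theorem slice_compact {β : Type*} [TopologicalSpace β] {A : Set (ℝ × β)} (hA : IsCompact A)
    (r : ℝ) : IsCompact (Prod.mk r ⁻¹' A) := by
  have : Prod.mk r ⁻¹' A = Prod.snd '' (A ∩ ({r} ×ˢ univ)) := by
    ext y
    constructor
    · intro hy
      exact ⟨(r, y), ⟨hy, ⟨rfl, trivial⟩⟩, rfl⟩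
    · rintro ⟨⟨r', y'⟩, ⟨hA', hr', -⟩, rfl⟩
      rcases hr' with ⟨rfl, -⟩
      exact hA'
  rw [this]
  exact ((hA.inter_right (isClosed_singleton.prod isClosed_univ)).image continuous_snd)

theorem mulBM_step
    (IH : ∀ (A B : Set (Fin n → ℝ)), IsCompact A → IsCompact B → A.Nonempty → B.Nonempty →
      ∀ t : ℝ, 0 < t → t < 1 →
      volume A ^ (1 - t) * volume B ^ t ≤ volume ((1 - t) • A + t • B))
    (A B : Set (ℝ × (Fin n → ℝ))) (hA : IsCompact A) (hB : IsCompact B)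
    (hAne : A.Nonempty) (hBne : B.Nonempty) (t : ℝ) (ht0 : 0 < t) (ht1 : t < 1) :
    volume A ^ (1 - t) * volume B ^ t ≤ volume ((1 - t) • A + t • B) := by
  have h1t : (0:ℝ) < 1 - t := by linarith
  set C := (1 - t) • A + t • B with hC
  have hCcomp : IsCompact C := by
    apply IsCompact.add
    · rw [← Set.image_smul]; exact hA.image (continuous_const_smul _)
    · rw [← Set.image_smul]; exact hB.image (continuous_const_smul _)
  set f : ℝ → ℝ≥0∞ := fun r => volume (Prod.mk r ⁻¹' A) with hf
  set g : ℝ → ℝ≥0∞ := fun r => volume (Prod.mk r ⁻¹' B) with hg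
  set h : ℝ → ℝ≥0∞ := fun r => volume (Prod.mk r ⁻¹' C) with hh
  have hfm : Measurable f := measurable_measure_prodMk_left hA.measurableSet
  have hgm : Measurable g := measurable_measure_prodMk_left hB.measurableSet
  have hhm : Measurable h := measurable_measure_prodMk_left hCcomp.measurableSet
  have volA : volume A = ∫⁻ r, f r := by
    rw [Measure.volume_eq_prod, Measure.prod_apply hA.measurableSet]
  have volB : volume B = ∫⁻ r, g r := by
    rw [Measure.volume_eq_prod, Measure.prod_apply hB.measurableSet]
  have volC : volume C = ∫⁻ r, h r := by
    rw [Measure.volume_eq_prod, Measure.prod_apply hCcomp.measurableSet]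
  -- bounds
  have boundf : ∀ r, f r ≤ volume (Prod.snd '' A) :=
    fun r => measure_mono (fun y hy => ⟨(r, y), hy, rfl⟩)
  have boundg : ∀ r, g r ≤ volume (Prod.snd '' B) :=
    fun r => measure_mono (fun y hy => ⟨(r, y), hy, rfl⟩)
  have boundh : ∀ r, h r ≤ volume (Prod.snd '' C) :=
    fun r => measure_mono (fun y hy => ⟨(r, y), hy, rfl⟩)
  -- the PL hypothesis
  have hyp : ∀ r s : ℝ, f r ^ (1 - t) * g s ^ t ≤ h ((1 - t) * r + t * s) := by
    intro r s
    rcases eq_empty_or_nonempty (Prod.mk r ⁻¹' A) with hAr | hAr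
    · rw [hf]; simp only [hAr, measure_empty, ENNReal.zero_rpow_of_pos h1t, zero_mul]
      exact zero_le
    rcases eq_empty_or_nonempty (Prod.mk s ⁻¹' B) with hBs | hBs
    · rw [hg]; simp only [hBs, measure_empty, ENNReal.zero_rpow_of_pos ht0, mul_zero]
      exact zero_le
    have hsub : (1 - t) • (Prod.mk r ⁻¹' A) + t • (Prod.mk s ⁻¹' B)
        ⊆ Prod.mk ((1 - t) * r + t * s) ⁻¹' C := by
      rintro z ⟨u, ⟨u', hu', rfl⟩, v, ⟨v', hv', rfl⟩, rfl⟩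
      have : ((1 - t) * r + t * s, (1 - t) • u' + t • v')
          = (1 - t) • (r, u') + t • (s, v') := by
        simp [Prod.smul_mk, smul_eq_mul]
      show ((1 - t) * r + t * s, (1 - t) • u' + t • v') ∈ C
      rw [this, hC]
      exact Set.add_mem_add (Set.smul_mem_smul_set hu') (Set.smul_mem_smul_set hv')
    calc f r ^ (1 - t) * g s ^ t
        ≤ volume ((1 - t) • (Prod.mk r ⁻¹' A) + t • (Prod.mk s ⁻¹' B)) :=
          IH _ _ (slice_compact hA r) (slice_compact hB s) hAr hBs t ht0 ht1
      _ ≤ h ((1 - t) * r + t * s) := measure_mono hsub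
  have key := pl1d t ht0 ht1 f g h hfm hgm hhm
    (volume (Prod.snd '' A)) (volume (Prod.snd '' B)) (volume (Prod.snd '' C))
    (hA.image continuous_snd).measure_lt_top.ne
    (hB.image continuous_snd).measure_lt_top.ne
    (hCcomp.image continuous_snd).measure_lt_top.ne
    boundf boundg boundh
    (by rw [← volA]; exact hA.measure_lt_top.ne)
    (by rw [← volB]; exact hB.measure_lt_top.ne) hyp
  rw [volA, volB, volC]
  exact key

theorem mulBM : ∀ (n : ℕ) (A B : Set (Fin n → ℝ)), IsCompact A → IsCompact B →
    A.Nonempty → B.Nonempty → ∀ t : ℝ, 0 < t → t < 1 →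
    volume A ^ (1 - t) * volume B ^ t ≤ volume ((1 - t) • A + t • B) := by
  intro n
  induction n with
  | zero =>
    intro A B hA hB hAne hBne t ht0 ht1
    have huniv : ∀ (S : Set (Fin 0 → ℝ)), S.Nonempty → S = univ := by
      intro S ⟨x, hx⟩
      ext y
      simp only [mem_univ, iff_true]
      rwa [Subsingleton.elim y x]
    have hvol : volume (univ : Set (Fin 0 → ℝ)) = 1 := by
      rw [volume_pi, Measure.pi_univ]
      simp
    have hCne : ((1 - t) • A + t • B).Nonempty := by
      obtain ⟨a, ha⟩ := hAne
      obtain ⟨b, hb⟩ := hBne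
      exact ⟨(1-t) • a + t • b, Set.add_mem_add (Set.smul_mem_smul_set ha)
        (Set.smul_mem_smul_set hb)⟩
    rw [huniv _ hCne, huniv A hAne, huniv B hBne, hvol]
    simp
  | succ n IH =>
    intro A B hA hB hAne hBne t ht0 ht1
    set e := MeasurableEquiv.piFinSuccAbove (fun _ : Fin (n+1) => ℝ) 0 with he
    have hemap : ∀ x : Fin (n+1) → ℝ, e x = (x 0, fun j => x (Fin.succAbove 0 j)) :=
      fun x => rfl
    have hecont : Continuous e := by
      rw [continuous_congr (fun x => hemap x)]
      exact (continuous_apply 0).prodMk (continuous_pi fun j => continuous_apply _)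
    have headd : ∀ (c d : ℝ) (x y : Fin (n+1) → ℝ), e (c • x + d • y) = c • e x + d • e y :=
      fun c d x y => rfl
    have hmp : MeasurePreserving e volume volume := by
      have h2 := measurePreserving_piFinSuccAbove (fun _ : Fin (n+1) => (volume : Measure ℝ)) 0
      rw [Measure.volume_eq_prod, volume_pi]
      convert h2 using 2 <;> rfl
    -- images
    have himg : ∀ (S : Set (Fin (n+1) → ℝ)), MeasurableSet S → volume (e '' S) = volume S := by
      intro S hS
      have : e '' S = e.symm ⁻¹' S := Equiv.image_eq_preimage_symm _ _
      rw [this]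
      exact (MeasurePreserving.symm e hmp).measure_preimage hS.nullMeasurableSet
    have himgcomb : e '' ((1 - t) • A + t • B) = (1 - t) • (e '' A) + t • (e '' B) := by
      ext z
      constructor
      · rintro ⟨w, ⟨u, ⟨a, ha, rfl⟩, v, ⟨b, hb, rfl⟩, rfl⟩, rfl⟩
        rw [headd]
        exact Set.add_mem_add (Set.smul_mem_smul_set (mem_image_of_mem e ha))
          (Set.smul_mem_smul_set (mem_image_of_mem e hb))
      · rintro ⟨u, ⟨u', ⟨a, ha, rfl⟩, rfl⟩, v, ⟨v', ⟨b, hb, rfl⟩, rfl⟩, rfl⟩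
        refine ⟨(1 - t) • a + t • b, Set.add_mem_add (Set.smul_mem_smul_set ha)
          (Set.smul_mem_smul_set hb), ?_⟩
        rw [headd]
    have hCm : IsCompact ((1 - t) • A + t • B) := by
      apply IsCompact.add
      · rw [← Set.image_smul]; exact hA.image (continuous_const_smul _)
      · rw [← Set.image_smul]; exact hB.image (continuous_const_smul _)
    have step := mulBM_step IH (e '' A) (e '' B) (hA.image hecont) (hB.image hecont)
      (hAne.image e) (hBne.image e) t ht0 ht1
    rwa [himg A hA.measurableSet, himg B hB.measurableSet, ← himgcomb,
      himg _ hCm.measurableSet] at step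

theorem mulBM_euc {n : ℕ} (A B : Set (EuclideanSpace ℝ (Fin n)))
    (hA : IsCompact A) (hB : IsCompact B) (hAne : A.Nonempty) (hBne : B.Nonempty)
    {t : ℝ} (ht0 : 0 < t) (ht1 : t < 1) :
    volume A ^ (1 - t) * volume B ^ t ≤ volume ((1 - t) • A + t • B) := by
  set e := (MeasurableEquiv.toLp 2 (Fin n → ℝ)).symm with he
  have hecont : Continuous e := (PiLp.continuousLinearEquiv 2 ℝ _).continuous
  have headd : ∀ (c d : ℝ) (x y : EuclideanSpace ℝ (Fin n)),
      e (c • x + d • y) = c • e x + d • e y := fun c d x y => rfl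
  have hmp : MeasurePreserving e volume volume :=
    EuclideanSpace.volume_preserving_symm_measurableEquiv_toLp (Fin n)
  have himg : ∀ (S : Set (EuclideanSpace ℝ (Fin n))), MeasurableSet S →
      volume (e '' S) = volume S := by
    intro S hS
    have h2 : e '' S = e.symm ⁻¹' S := Equiv.image_eq_preimage_symm _ _
    rw [h2]
    exact (MeasurePreserving.symm e hmp).measure_preimage hS.nullMeasurableSet
  have himgcomb : e '' ((1 - t) • A + t • B) = (1 - t) • (e '' A) + t • (e '' B) := by
    ext z
    constructor
    · rintro ⟨w, ⟨u, ⟨a, ha, rfl⟩, v, ⟨b, hb, rfl⟩, rfl⟩, rfl⟩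
      rw [headd]
      exact Set.add_mem_add (Set.smul_mem_smul_set (mem_image_of_mem e ha))
        (Set.smul_mem_smul_set (mem_image_of_mem e hb))
    · rintro ⟨u, ⟨u', ⟨a, ha, rfl⟩, rfl⟩, v, ⟨v', ⟨b, hb, rfl⟩, rfl⟩, rfl⟩
      refine ⟨(1 - t) • a + t • b, Set.add_mem_add (Set.smul_mem_smul_set ha)
        (Set.smul_mem_smul_set hb), ?_⟩
      rw [headd]
  have hCm : IsCompact ((1 - t) • A + t • B) := by
    apply IsCompact.add
    · rw [← Set.image_smul]; exact hA.image (continuous_const_smul _)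
    · rw [← Set.image_smul]; exact hB.image (continuous_const_smul _)
  have step := mulBM n (e '' A) (e '' B) (hA.image hecont) (hB.image hecont)
    (hAne.image e) (hBne.image e) t ht0 ht1
  rwa [himg A hA.measurableSet, himg B hB.measurableSet, ← himgcomb,
    himg _ hCm.measurableSet] at step

theorem smul_smul_set {E : Type*} [AddCommGroup E] [Module ℝ E] (c d : ℝ) (S : Set E) :
    c • (d • S) = (c * d) • S := by
  rw [← Set.image_smul, ← Set.image_smul, ← Set.image_smul, Set.image_image]
  simp [smul_smul]

theorem addBM_euc {n : ℕ} (hn : 1 ≤ n) (A B : Set (EuclideanSpace ℝ (Fin n)))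
    (hA : IsCompact A) (hB : IsCompact B) (hAne : A.Nonempty) (hBne : B.Nonempty) :
    (volume A).toReal ^ ((n : ℝ)⁻¹) + (volume B).toReal ^ ((n : ℝ)⁻¹) ≤
      (volume (A + B)).toReal ^ ((n : ℝ)⁻¹) := by
  have hn0 : (n : ℝ) ≠ 0 := Nat.cast_ne_zero.mpr (by omega)
  have hinv0 : ((n : ℝ)⁻¹) ≠ 0 := inv_ne_zero hn0
  have hinvnn : (0:ℝ) ≤ (n : ℝ)⁻¹ := by positivity
  have hABfin : volume (A + B) ≠ ⊤ := (hA.add hB).measure_lt_top.ne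
  obtain ⟨x₀, hx₀⟩ := hAne
  obtain ⟨y₀, hy₀⟩ := hBne
  have hBsub : volume B ≤ volume (A + B) := by
    calc volume B = volume (x₀ +ᵥ B) := (measure_vadd _ _ _).symm
      _ ≤ volume (A + B) := measure_mono (by
          rintro z ⟨y, hy, rfl⟩
          exact Set.add_mem_add hx₀ hy)
  have hAsub : volume A ≤ volume (A + B) := by
    calc volume A = volume (y₀ +ᵥ A) := (measure_vadd _ _ _).symm
      _ ≤ volume (A + B) := measure_mono (by
          rintro z ⟨x, hx, rfl⟩
          show y₀ +ᵥ x ∈ A + B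
          have h2 : y₀ +ᵥ x = x + y₀ := by simp [vadd_eq_add, add_comm]
          rw [h2]
          exact Set.add_mem_add hx hy₀)
  rcases eq_or_ne (volume A) 0 with hA0 | hA0
  · rw [hA0]
    simp only [ENNReal.toReal_zero, Real.zero_rpow hinv0, zero_add]
    exact Real.rpow_le_rpow ENNReal.toReal_nonneg (ENNReal.toReal_mono hABfin hBsub) hinvnn
  rcases eq_or_ne (volume B) 0 with hB0 | hB0
  · rw [hB0]
    simp only [ENNReal.toReal_zero, Real.zero_rpow hinv0, add_zero]
    exact Real.rpow_le_rpow ENNReal.toReal_nonneg (ENNReal.toReal_mono hABfin hAsub) hinvnn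
  -- both positive
  set a := (volume A).toReal with ha
  set b := (volume B).toReal with hb
  have hapos : 0 < a := ENNReal.toReal_pos hA0 hA.measure_lt_top.ne
  have hbpos : 0 < b := ENNReal.toReal_pos hB0 hB.measure_lt_top.ne
  set α := a ^ ((n : ℝ)⁻¹) with hα
  set β := b ^ ((n : ℝ)⁻¹) with hβ
  have hαpos : 0 < α := Real.rpow_pos_of_pos hapos _
  have hβpos : 0 < β := Real.rpow_pos_of_pos hbpos _
  set t := β / (α + β) with ht
  have ht0 : 0 < t := by positivity
  have ht1 : t < 1 := by
    rw [ht, div_lt_one (by positivity)]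
    linarith
  have h1t : 1 - t = α / (α + β) := by
    rw [ht]
    field_simp
    ring
  have h1tpos : 0 < 1 - t := by rw [h1t]; positivity
  set A' := ((1 - t)⁻¹) • A with hA'
  set B' := (t⁻¹) • B with hB'
  have hA'c : IsCompact A' := by
    rw [hA', ← Set.image_smul]; exact hA.image (continuous_const_smul _)
  have hB'c : IsCompact B' := by
    rw [hB', ← Set.image_smul]; exact hB.image (continuous_const_smul _)
  have hA'ne : A'.Nonempty := ⟨_, Set.smul_mem_smul_set hx₀⟩
  have hB'ne : B'.Nonempty := ⟨_, Set.smul_mem_smul_set hy₀⟩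
  have hrecomb : (1 - t) • A' + t • B' = A + B := by
    rw [hA', hB', smul_smul_set, smul_smul_set, mul_inv_cancel₀ h1tpos.ne',
      mul_inv_cancel₀ ht0.ne', one_smul, one_smul]
  have mult := mulBM_euc A' B' hA'c hB'c hA'ne hB'ne ht0 ht1
  rw [hrecomb] at mult
  have hvolA' : volume A' = ENNReal.ofReal (((1-t)⁻¹) ^ n) * volume A := by
    rw [hA', Measure.addHaar_smul, finrank_euclideanSpace_fin, abs_of_pos (by positivity)]
  have hvolB' : volume B' = ENNReal.ofReal ((t⁻¹) ^ n) * volume B := by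
    rw [hB', Measure.addHaar_smul, finrank_euclideanSpace_fin, abs_of_pos (by positivity)]
  rw [hvolA', hvolB'] at mult
  -- convert to reals
  have hA'fin : (ENNReal.ofReal (((1-t)⁻¹) ^ n) * volume A) ≠ ⊤ :=
    ENNReal.mul_ne_top ENNReal.ofReal_ne_top hA.measure_lt_top.ne
  have hB'fin : (ENNReal.ofReal ((t⁻¹) ^ n) * volume B) ≠ ⊤ :=
    ENNReal.mul_ne_top ENNReal.ofReal_ne_top hB.measure_lt_top.ne
  have real_ineq := ENNReal.toReal_mono hABfin mult
  rw [ENNReal.toReal_mul, ← ENNReal.toReal_rpow, ← ENNReal.toReal_rpow,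
    ENNReal.toReal_mul, ENNReal.toReal_mul, ENNReal.toReal_ofReal (by positivity),
    ENNReal.toReal_ofReal (by positivity), ← ha, ← hb] at real_ineq
  -- now real_ineq : ((1-t)⁻¹^n * a)^(1-t) * (t⁻¹^n * b)^t ≤ (volume (A+B)).toReal
  have han : α ^ n = a := Real.rpow_inv_natCast_pow hapos.le (by omega)
  have hbn : β ^ n = b := Real.rpow_inv_natCast_pow hbpos.le (by omega)
  have hkey : ((1-t)⁻¹) ^ n * a = (α + β) ^ n := by
    rw [← han, ← mul_pow, h1t]
    congr 1
    field_simp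
  have hkey' : (t⁻¹) ^ n * b = (α + β) ^ n := by
    rw [← hbn, ← mul_pow, ht]
    congr 1
    field_simp
  rw [hkey, hkey'] at real_ineq
  have hsum : ((α + β) ^ n : ℝ) ^ (1 - t) * ((α + β) ^ n) ^ t = (α + β) ^ n := by
    rw [← Real.rpow_add (by positivity)]
    norm_num
  rw [hsum] at real_ineq
  calc α + β = (((α + β) ^ n : ℝ)) ^ ((n:ℝ)⁻¹) := by
        rw [Real.pow_rpow_inv_natCast (by positivity) (by omega)]
    _ ≤ (volume (A + B)).toReal ^ ((n:ℝ)⁻¹) :=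
        Real.rpow_le_rpow (by positivity) real_ineq hinvnn

/-- Santaló-type inequality: for a nonempty compact ball-body `K ⊆ ℝⁿ`,
`Vol(K)^{1/n} + Vol(K^c)^{1/n} ≤ Vol(B(0,1))^{1/n}`. -/
theorem stmt4 (n : ℕ) (hn : 1 ≤ n) (K : Set (EuclideanSpace ℝ (Fin n)))
    (hne : K.Nonempty) (hcomp : IsCompact K) (hbb : K = cDual (cDual K)) :
    (volume K).toReal ^ ((n : ℝ)⁻¹) + (volume (cDual K)).toReal ^ ((n : ℝ)⁻¹) ≤
      (volume (closedBall (0 : EuclideanSpace ℝ (Fin n)) 1)).toReal ^ ((n : ℝ)⁻¹) := by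
  obtain ⟨x₀, hx₀⟩ := hne
  set L := cDual K with hL
  -- L is closed
  have hLclosed : IsClosed L := by
    have h2 : L = ⋂ x ∈ K, {y | ‖x - y‖ ≤ 1} := by
      ext y; simp [hL, cDual]
    rw [h2]
    exact isClosed_biInter fun x _ =>
      isClosed_le ((continuous_const.sub continuous_id).norm) continuous_const
  have hLsub : L ⊆ closedBall x₀ 1 := by
    intro y hy
    rw [mem_closedBall, dist_eq_norm, ← norm_sub_rev]
    exact hy x₀ hx₀
  have hLcomp : IsCompact L :=
    (isCompact_closedBall x₀ 1).of_isClosed_subset hLclosed hLsub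
  -- L is nonempty
  have hLne : L.Nonempty := by
    by_contra hLem
    rw [not_nonempty_iff_eq_empty] at hLem
    have hKuniv : K = univ := by
      rw [hbb, hLem]
      ext y
      simp [cDual]
    haveI : Nontrivial (EuclideanSpace ℝ (Fin n)) := by
      refine ⟨0, EuclideanSpace.single (⟨0, hn⟩ : Fin n) (1:ℝ), fun h => ?_⟩
      have := congrArg (fun v => v (⟨0, hn⟩ : Fin n)) h
      simp [EuclideanSpace.single_apply] at this
    exact noncompact_univ (EuclideanSpace ℝ (Fin n)) (hKuniv ▸ hcomp)
  set B := ((-1 : ℝ)) • L with hB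
  have hBcomp : IsCompact B := by
    rw [hB, ← Set.image_smul]; exact hLcomp.image (continuous_const_smul _)
  have hBne : B.Nonempty := hLne.smul_set
  have hvolB : volume B = volume L := by
    rw [hB, Measure.addHaar_smul, finrank_euclideanSpace_fin]
    simp
  have hsum : K + B ⊆ closedBall (0 : EuclideanSpace ℝ (Fin n)) 1 := by
    rintro z ⟨x, hx, w, ⟨y, hy, rfl⟩, rfl⟩
    rw [mem_closedBall, dist_zero_right]
    show ‖x + (-1 : ℝ) • y‖ ≤ 1
    have h2 : x + (-1 : ℝ) • y = x - y := by
      rw [neg_smul, one_smul, sub_eq_add_neg]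
    rw [h2]
    exact hy x hx
  have hmain := addBM_euc hn K B hcomp hBcomp ⟨x₀, hx₀⟩ hBne
  rw [hvolB] at hmain
  refine le_trans hmain ?_
  have hballfin : volume (closedBall (0 : EuclideanSpace ℝ (Fin n)) 1) ≠ ⊤ :=
    measure_closedBall_lt_top.ne
  exact Real.rpow_le_rpow ENNReal.toReal_nonneg
    (ENNReal.toReal_mono hballfin (measure_mono hsum)) (by positivity)
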